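/- Let A ∈ ℤ^{m×n} with 1 ≤ m < n satisfy the regularity assumptions and write A = (A_1, A_2) with A_1 ∈ ℤ^{m×m} and det A_1 ≠ 0. Let v̄ = A_1·1̄ be the sum of the first m columns of A, let 1̂ ∈ ℤ^n be the vector whose first m coordinates are 1 and whose last n−m coordinates are 0, and let L_A^⊥ = {z ∈ ℤ^n : A z = 0}. Then for every integer s ≥ 1, g_s(A) ≥ (1/(n−m+1)) · (m(A)/M(A)) · ( μ_s(P(A, v̄) − 1̂, L_A^⊥) − 2 − c(A_1, A) ), where m(A) and M(A) are the minimal and maximal absolute values of the m×m minors of A. -/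

import Mathlib

open scoped BigOperators
open Matrix

noncomputable section

/-- The real matrix obtained from an integer matrix. -/
def Rmat {m n : ℕ} (A : Matrix (Fin m) (Fin n) ℤ) : Matrix (Fin m) (Fin n) ℝ :=
  A.map (Int.cast : ℤ → ℝ)

/-- The real vector obtained from an integer vector. -/
def Rvec {m : ℕ} (b : Fin m → ℤ) : Fin m → ℝ := fun i => (b i : ℝ)

/-- The knapsack polytope P(A,b) = {x ≥ 0 : A x = b}. -/
def knap {m n : ℕ} (A : Matrix (Fin m) (Fin n) ℤ) (b : Fin m → ℝ) : Set (Fin n → ℝ) :=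
  {x | (∀ i, 0 ≤ x i) ∧ (Rmat A).mulVec x = b}

/-- The set F_s(A) of integer vectors b for which P(A,b) contains at least s integer points. -/
def feas {m n : ℕ} (s : ℕ) (A : Matrix (Fin m) (Fin n) ℤ) : Set (Fin m → ℤ) :=
  {b | s ≤ Set.ncard {x : Fin n → ℤ | (∀ i, 0 ≤ x i) ∧ A.mulVec x = b}}

/-- The cone generated by the columns of A. -/
def coneOf {m n : ℕ} (A : Matrix (Fin m) (Fin n) ℤ) : Set (Fin m → ℝ) :=
  {y | ∃ x : Fin n → ℝ, (∀ i, 0 ≤ x i) ∧ (Rmat A).mulVec x = y}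

/-- The generalized diagonal s-Frobenius number g_s(A, w). -/
def gDiag {m n : ℕ} (s : ℕ) (A : Matrix (Fin m) (Fin n) ℤ) (w : Fin m → ℝ) : ℝ :=
  sInf {t : ℝ | 0 ≤ t ∧
    ∀ b : Fin m → ℤ, Rvec b ∈ interior ((fun c => t • w + c) '' coneOf A) → b ∈ feas s A}

/-- v = A·1 is the sum of the columns of A (as a real vector). -/
def vA {m n : ℕ} (A : Matrix (Fin m) (Fin n) ℤ) : Fin m → ℝ :=
  (Rmat A).mulVec (fun _ => 1)

/-- The diagonal s-Frobenius number g_s(A) = g_s(A, A·1). -/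
def gFrob {m n : ℕ} (s : ℕ) (A : Matrix (Fin m) (Fin n) ℤ) : ℝ := gDiag s A (vA A)

/-- The regularity assumptions: the m×m minors of A have gcd 1, and the only
nonnegative real solution of A x = 0 is x = 0. -/
def regular {m n : ℕ} (A : Matrix (Fin m) (Fin n) ℤ) : Prop :=
  Finset.univ.gcd (fun I : Fin m ↪ Fin n => (A.submatrix id ⇑I).det) = 1 ∧
  ∀ x : Fin n → ℝ, (∀ i, 0 ≤ x i) → (Rmat A).mulVec x = 0 → x = 0

/-- The s-covering radius of K with respect to L: the smallest μ > 0 such that every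
point of the real span of L lies in y + μK for at least s distinct y ∈ L. -/
def muCov {N : ℕ} (s : ℕ) (K L : Set (Fin N → ℝ)) : ℝ :=
  sInf {μ : ℝ | 0 < μ ∧ ∀ x ∈ Submodule.span ℝ L,
    ∃ T : Finset (Fin N → ℝ), ↑T ⊆ L ∧ s ≤ T.card ∧ ∀ y ∈ T, ∃ k ∈ K, x = y + μ • k}

/-- The set of absolute values of m×m minors of A. -/
def minorAbs {m n : ℕ} (A : Matrix (Fin m) (Fin n) ℤ) : Set ℤ :=
  {d | ∃ I : Fin m ↪ Fin n, d = |(A.submatrix id ⇑I).det|}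

/-- m(A): the minimal absolute m×m minor of A. -/
def mMin {m n : ℕ} (A : Matrix (Fin m) (Fin n) ℤ) : ℤ := sInf (minorAbs A)

/-- M(A): the maximal absolute m×m minor of A. -/
def mMax {m n : ℕ} (A : Matrix (Fin m) (Fin n) ℤ) : ℤ := sSup (minorAbs A)

/-- The lattice L_A^⊥ = {z ∈ ℤ^n : A z = 0}, viewed as a subset of ℝ^n. -/
def kerLat {m n : ℕ} (A : Matrix (Fin m) (Fin n) ℤ) : Set (Fin n → ℝ) :=
  {x | ∃ z : Fin n → ℤ, A.mulVec z = 0 ∧ x = Rvec z}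

/-- √(det (A Aᵀ)). -/
def sqrtDet {m n : ℕ} (A : Matrix (Fin m) (Fin n) ℤ) : ℝ :=
  Real.sqrt (((A * Aᵀ).det : ℤ) : ℝ)

/-- The s-Frobenius number of a positive primitive integer vector. -/
def sFrob {n : ℕ} (s : ℕ) (a : Fin n → ℤ) : ℤ :=
  sSup {b : ℤ | Set.ncard {x : Fin n → ℤ | (∀ i, 0 ≤ x i) ∧ ∑ i, a i * x i = b} < s}

/-- The full-rank lattice in ℝ^d with basis the columns of an invertible matrix B. -/
def latSet {d : ℕ} (B : Matrix (Fin d) (Fin d) ℝ) : Set (Fin d → ℝ) :=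
  {x | ∃ z : Fin d → ℤ, x = B.mulVec (fun i => (z i : ℝ))}

/-- The absolute s-inhomogeneous minimum ϑ_s(K) = inf_L μ_s(K,L)/det(L)^{1/d}. -/
def theta (s d : ℕ) (K : Set (Fin d → ℝ)) : ℝ :=
  sInf {r : ℝ | ∃ B : Matrix (Fin d) (Fin d) ℝ, B.det ≠ 0 ∧
    r = muCov s K (latSet B) / |B.det| ^ ((1 : ℝ) / d)}

/-- The standard simplex S_d ⊂ ℝ^d. -/
def stdSimplex' (d : ℕ) : Set (Fin d → ℝ) :=
  {x | (∀ i, 0 ≤ x i) ∧ ∑ i, x i ≤ 1}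



lemma finset_gcd_bezout {ι : Type*} [DecidableEq ι] (t : Finset ι) (f : ι → ℤ) :
    ∃ c : ι → ℤ, (t.gcd f : ℤ) = ∑ i ∈ t, c i * f i := by
  classical
  induction t using Finset.induction_on with
  | empty => exact ⟨0, by simp⟩
  | insert a s hne ih =>
    obtain ⟨c, hc⟩ := ih
    rw [Finset.gcd_insert]
    have h := Int.gcd_eq_gcd_ab (f a) (s.gcd f)
    have hg : GCDMonoid.gcd (f a) (s.gcd f) = (Int.gcd (f a) (s.gcd f) : ℤ) :=
      (Int.coe_gcd _ _).symm
    refine ⟨Function.update (fun i => (Int.gcdB (f a) (s.gcd f)) * c i) a (Int.gcdA (f a) (s.gcd f)), ?_⟩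
    rw [Finset.sum_insert hne, hg, h, Function.update_self]
    have : ∀ i ∈ s, Function.update (fun i => (Int.gcdB (f a) (s.gcd f)) * c i) a
        (Int.gcdA (f a) (s.gcd f)) i * f i = Int.gcdB (f a) (s.gcd f) * (c i * f i) := by
      intro i hi
      rw [Function.update_of_ne (by rintro rfl; exact hne hi)]
      ring
    rw [Finset.sum_congr rfl this, ← Finset.mul_sum, ← hc]
    ring

lemma minor_single_mem {m n : ℕ} (A : Matrix (Fin m) (Fin n) ℤ) (I : Fin m ↪ Fin n) (i : Fin m) :
    ∃ z : Fin n → ℤ, A.mulVec z = (A.submatrix id ⇑I).det • Pi.single i 1 := by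
  classical
  set S := A.submatrix id ⇑I with hS
  refine ⟨fun l => ∑ j, if I j = l then S.adjugate j i else 0, ?_⟩
  funext r
  have : A.mulVec (fun l => ∑ j, if I j = l then S.adjugate j i else 0) r
      = ∑ j, A r (I j) * S.adjugate j i := by
    simp only [Matrix.mulVec, dotProduct, Finset.mul_sum]
    rw [Finset.sum_comm]
    refine Finset.sum_congr rfl fun j _ => ?_
    rw [Finset.sum_eq_single (I j)]
    · simp
    · intro b _ hb
      rw [if_neg (fun h => hb h.symm), mul_zero]
    · simp
  rw [this]
  have h2 : ∑ j, A r (I j) * S.adjugate j i = (S * S.adjugate) r i := by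
    simp [Matrix.mul_apply, hS]
  rw [h2, Matrix.mul_adjugate]
  simp [Matrix.one_apply, Pi.single_apply, mul_comm]

lemma A_surjective {m n : ℕ} (A : Matrix (Fin m) (Fin n) ℤ)
    (hg : Finset.univ.gcd (fun I : Fin m ↪ Fin n => (A.submatrix id ⇑I).det) = 1)
    (b : Fin m → ℤ) : ∃ z : Fin n → ℤ, A.mulVec z = b := by
  classical
  set Λ : Submodule ℤ (Fin m → ℤ) := LinearMap.range (Matrix.mulVecLin A) with hΛ
  have hsingle : ∀ i : Fin m, Pi.single i (1 : ℤ) ∈ Λ := by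
    intro i
    obtain ⟨c, hc⟩ := finset_gcd_bezout (Finset.univ)
      (fun I : Fin m ↪ Fin n => (A.submatrix id ⇑I).det)
    rw [hg] at hc
    have : Pi.single i (1 : ℤ)
        = ∑ I : Fin m ↪ Fin n, c I • ((A.submatrix id ⇑I).det • (Pi.single i (1 : ℤ) : Fin m → ℤ)) := by
      simp only [smul_smul]
      rw [← Finset.sum_smul, ← hc, one_smul]
    rw [this]
    refine Submodule.sum_mem _ fun I _ => Submodule.smul_mem _ _ ?_
    obtain ⟨z, hz⟩ := minor_single_mem A I i
    exact ⟨z, hz⟩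
  have hb : b ∈ Λ := by
    have : b = ∑ i : Fin m, b i • Pi.single i (1 : ℤ) := by
      funext r
      simp [Pi.single_apply]
    rw [this]
    exact Submodule.sum_mem _ fun i _ => Submodule.smul_mem _ _ (hsingle i)
  obtain ⟨z, hz⟩ := hb
  exact ⟨z, hz⟩




lemma cast_mulVec {m n : ℕ} (A : Matrix (Fin m) (Fin n) ℤ) (z : Fin n → ℤ) :
    (Rmat A).mulVec (Rvec z) = Rvec (A.mulVec z) := by
  funext i; simp [Rmat, Rvec, Matrix.mulVec, dotProduct]

lemma cast_det {p : ℕ} (B : Matrix (Fin p) (Fin p) ℤ) : (Rmat B).det = (B.det : ℝ) := by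
  rw [Rmat]
  have := (RingHom.map_det (Int.castRingHom ℝ) B).symm
  simpa using this

lemma mulVec_split {α : Type*} [NonUnitalNonAssocSemiring α] {m k p : ℕ}
    (B : Matrix (Fin p) (Fin (m + k)) α) (x : Fin (m + k) → α) :
    B.mulVec x = (Matrix.of fun i j => B i (Fin.castAdd k j)).mulVec (fun j => x (Fin.castAdd k j))
      + (Matrix.of fun i j => B i (Fin.natAdd m j)).mulVec (fun j => x (Fin.natAdd m j)) := by
  funext i
  simp [Matrix.mulVec, dotProduct, Fin.sum_univ_add]

section KerSpan

variable {m k : ℕ} (A : Matrix (Fin m) (Fin (m + k)) ℤ)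
  (A1 : Matrix (Fin m) (Fin m) ℤ)
  (A2 : Matrix (Fin m) (Fin k) ℤ)

/-- the j-th integer kernel basis vector -/
def wker (j : Fin k) : Fin (m + k) → ℤ :=
  Fin.addCases (fun i => -((A1.adjugate * A2) i j)) (fun j' => if j' = j then A1.det else 0)

lemma wker_mem (hA1 : A1 = Matrix.of fun i j => A i (Fin.castAdd k j))
    (hA2 : A2 = Matrix.of fun i j => A i (Fin.natAdd m j)) :
    ∀ j : Fin k, A.mulVec (wker A1 A2 j) = 0 := by
  intro j
  rw [mulVec_split A (wker A1 A2 j), ← hA1, ← hA2]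
  have h1 : (fun j' => wker A1 A2 j (Fin.castAdd k j')) = fun i => -((A1.adjugate * A2) i j) := by
    funext i; simp [wker]
  have h2 : (fun j' => wker A1 A2 j (Fin.natAdd m j')) = fun j' => if j' = j then A1.det else 0 := by
    funext j'; simp [wker]
  rw [h1, h2]
  funext r
  have e1 : A1.mulVec (fun i => -((A1.adjugate * A2) i j)) r
      = -(A1 * (A1.adjugate * A2)) r j := by
    simp [Matrix.mulVec, dotProduct, Matrix.mul_apply, Finset.sum_neg_distrib]
  have e2 : A2.mulVec (fun j' => if j' = j then A1.det else 0) r = A1.det * A2 r j := by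
    simp [Matrix.mulVec, dotProduct, Finset.sum_ite_eq', mul_comm]
  simp only [Pi.add_apply, e1, e2, ← Matrix.mul_assoc, Matrix.mul_adjugate,
    Matrix.smul_mul, Matrix.neg_apply, Matrix.smul_apply, smul_eq_mul,
    Matrix.one_mul, Pi.zero_apply]
  ring

lemma ker_sub_span (hA1 : A1 = Matrix.of fun i j => A i (Fin.castAdd k j))
    (hA2 : A2 = Matrix.of fun i j => A i (Fin.natAdd m j)) (hdet : A1.det ≠ 0)
    (x : Fin (m + k) → ℝ) (hx : (Rmat A).mulVec x = 0) :
    x ∈ Submodule.span ℝ (kerLat A) := by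
  classical
  set d : ℝ := (A1.det : ℝ) with hd
  have hdne : d ≠ 0 := by rw [hd]; exact_mod_cast hdet
  set y : Fin (m + k) → ℝ :=
    ∑ j : Fin k, (x (Fin.natAdd m j) / d) • Rvec (wker A1 A2 j) with hy
  have hymem : y ∈ Submodule.span ℝ (kerLat A) := by
    refine Submodule.sum_mem _ fun j _ => Submodule.smul_mem _ _ ?_
    exact Submodule.subset_span ⟨wker A1 A2 j, wker_mem A A1 A2 hA1 hA2 j, rfl⟩
  have hZero : ∀ j : Fin k, (Rmat A).mulVecLin (Rvec (wker A1 A2 j)) = 0 := by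
    intro j
    rw [Matrix.mulVecLin_apply, cast_mulVec, wker_mem A A1 A2 hA1 hA2 j]
    funext r; simp [Rvec]
  have hyker : (Rmat A).mulVec y = 0 := by
    rw [← Matrix.mulVecLin_apply, hy, map_sum]
    refine Finset.sum_eq_zero fun j _ => ?_
    rw [LinearMap.map_smul, hZero j, smul_zero]
  -- natAdd coordinates agree
  have hnat : ∀ j' : Fin k, y (Fin.natAdd m j') = x (Fin.natAdd m j') := by
    intro j'
    rw [hy]
    simp only [Finset.sum_apply, Pi.smul_apply, smul_eq_mul]
    have : ∀ j : Fin k, x (Fin.natAdd m j) / d * Rvec (wker A1 A2 j) (Fin.natAdd m j')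
        = if j = j' then x (Fin.natAdd m j') else 0 := by
      intro j
      simp only [Rvec, wker, Fin.addCases_right]
      by_cases h : j' = j
      · subst h; rw [if_pos rfl, if_pos rfl, ← hd]; field_simp
      · rw [if_neg h, if_neg (fun hh => h hh.symm)]; simp
    rw [Finset.sum_congr rfl fun j _ => this j, Finset.sum_ite_eq' Finset.univ j']
    simp
  -- castAdd coordinates agree via injectivity of A1
  have hsplit : ∀ z : Fin (m + k) → ℝ, (Rmat A).mulVec z = 0 →
      (Rmat A1).mulVec (fun i => z (Fin.castAdd k i))
        = -(Rmat A2).mulVec (fun j => z (Fin.natAdd m j)) := by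
    intro z hz
    have h := mulVec_split (Rmat A) z
    rw [hz] at h
    have e1 : (Matrix.of fun i j => Rmat A i (Fin.castAdd k j)) = Rmat A1 := by
      rw [hA1]; rfl
    have e2 : (Matrix.of fun i j => Rmat A i (Fin.natAdd m j)) = Rmat A2 := by
      rw [hA2]; rfl
    rw [e1, e2] at h
    exact eq_neg_of_add_eq_zero_left h.symm
  have hcast : ∀ i : Fin m, y (Fin.castAdd k i) = x (Fin.castAdd k i) := by
    have h1 := hsplit x hx
    have h2 := hsplit y hyker
    have hnat' : (fun j => y (Fin.natAdd m j)) = fun j => x (Fin.natAdd m j) := funext hnat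
    rw [hnat'] at h2
    have hdiff : (Rmat A1).mulVec ((fun i => y (Fin.castAdd k i)) - fun i => x (Fin.castAdd k i)) = 0 := by
      rw [Matrix.mulVec_sub, h1, h2]; simp
    have hdetR : (Rmat A1).det ≠ 0 := by
      rw [cast_det]; exact_mod_cast hdet
    have hIs : IsUnit (Rmat A1).det := isUnit_iff_ne_zero.mpr hdetR
    have hzero : ((fun i => y (Fin.castAdd k i)) - fun i => x (Fin.castAdd k i)) = 0 := by
      calc ((fun i => y (Fin.castAdd k i)) - fun i => x (Fin.castAdd k i))
          = (1 : Matrix (Fin m) (Fin m) ℝ).mulVec ((fun i => y (Fin.castAdd k i)) - fun i => x (Fin.castAdd k i)) := by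
            rw [Matrix.one_mulVec]
        _ = ((Rmat A1)⁻¹ * Rmat A1).mulVec ((fun i => y (Fin.castAdd k i)) - fun i => x (Fin.castAdd k i)) := by
            rw [Matrix.nonsing_inv_mul _ hIs]
        _ = (Rmat A1)⁻¹.mulVec ((Rmat A1).mulVec ((fun i => y (Fin.castAdd k i)) - fun i => x (Fin.castAdd k i))) := by
            rw [Matrix.mulVec_mulVec]
        _ = 0 := by rw [hdiff]; simp
    intro i
    have := congrFun hzero i
    simpa [sub_eq_zero] using this
  have hxy : y = x := by
    funext l
    exact Fin.addCases (fun i => hcast i) (fun j => hnat j) l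
  rwa [← hxy]

end KerSpan

section Minors

variable {m n : ℕ} (A : Matrix (Fin m) (Fin n) ℤ)

lemma minorAbs_eq_range : minorAbs A = Set.range (fun I : Fin m ↪ Fin n => |(A.submatrix id ⇑I).det|) := by
  ext d; simp [minorAbs, Set.mem_range, eq_comm]

lemma minorAbs_finite : (minorAbs A).Finite := by
  rw [minorAbs_eq_range]; exact Set.finite_range _

lemma minorAbs_bddAbove : BddAbove (minorAbs A) := (minorAbs_finite A).bddAbove

lemma minorAbs_bddBelow : BddBelow (minorAbs A) := ⟨0, fun d ⟨I, hI⟩ => hI ▸ abs_nonneg _⟩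

lemma le_mMax (I : Fin m ↪ Fin n) : |(A.submatrix id ⇑I).det| ≤ mMax A :=
  le_csSup (minorAbs_bddAbove A) ⟨I, rfl⟩

lemma mMin_le (I : Fin m ↪ Fin n) : mMin A ≤ |(A.submatrix id ⇑I).det| :=
  csInf_le (minorAbs_bddBelow A) ⟨I, rfl⟩

lemma mMin_nonneg (I0 : Fin m ↪ Fin n) : 0 ≤ mMin A := by
  apply le_csInf (⟨|(A.submatrix id ⇑I0).det|, ⟨I0, rfl⟩⟩ : (minorAbs A).Nonempty)
  rintro d ⟨I, hI⟩; exact hI ▸ abs_nonneg _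

end Minors

section EntryBound

variable {m k : ℕ} (A : Matrix (Fin m) (Fin (m + k)) ℤ)
  (A1 : Matrix (Fin m) (Fin m) ℤ)
  (A2 : Matrix (Fin m) (Fin k) ℤ)

/-- the standard embedding of the first block -/
def embCast : Fin m ↪ Fin (m + k) := ⟨Fin.castAdd k, Fin.castAdd_injective m k⟩

lemma detA1_le_mMax (hA1 : A1 = Matrix.of fun i j => A i (Fin.castAdd k j)) :
    |A1.det| ≤ mMax A := by
  have : A1 = A.submatrix id ⇑(embCast (m := m) (k := k)) := by
    rw [hA1]; rfl
  rw [this]; exact le_mMax A _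

lemma mMin_le_detA1 (hA1 : A1 = Matrix.of fun i j => A i (Fin.castAdd k j)) :
    mMin A ≤ |A1.det| := by
  have : A1 = A.submatrix id ⇑(embCast (m := m) (k := k)) := by
    rw [hA1]; rfl
  rw [this]; exact mMin_le A _

lemma entry_bound (hA1 : A1 = Matrix.of fun i j => A i (Fin.castAdd k j))
    (hA2 : A2 = Matrix.of fun i j => A i (Fin.natAdd m j)) (hdet : A1.det ≠ 0)
    (i : Fin m) (j : Fin k) :
    |((Rmat A1)⁻¹ * Rmat A2) i j| * |(A1.det : ℝ)| ≤ (mMax A : ℝ) := by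
  classical
  have hdetR : (Rmat A1).det ≠ 0 := by rw [cast_det]; exact_mod_cast hdet
  have hIs : IsUnit (Rmat A1).det := isUnit_iff_ne_zero.mpr hdetR
  -- (A1⁻¹ * A2) i j = det(updateColumn) / det A1
  have hinv : (Rmat A1)⁻¹ = ((Rmat A1).det)⁻¹ • (Rmat A1).adjugate := by
    rw [Matrix.inv_def, Ring.inverse_eq_inv]
  have hentry : ((Rmat A1)⁻¹ * Rmat A2) i j
      = ((Rmat A1).det)⁻¹ * ((Rmat A1).updateCol i (fun r => Rmat A2 r j)).det := by
    rw [hinv, Matrix.smul_mul, Matrix.smul_apply, smul_eq_mul]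
    congr 1
    have : ((Rmat A1).adjugate * Rmat A2) i j
        = ((Rmat A1).adjugate.mulVec (fun r => Rmat A2 r j)) i := by
      simp [Matrix.mul_apply, Matrix.mulVec, dotProduct]
    rw [this, ← Matrix.cramer_eq_adjugate_mulVec, Matrix.cramer_apply]
  -- the updated column matrix is an integer minor of A
  have hupd : (Rmat A1).updateCol i (fun r => Rmat A2 r j)
      = Rmat (A.submatrix id
          (Function.update (fun i' : Fin m => Fin.castAdd k i') i (Fin.natAdd m j))) := by
    funext r c
    by_cases hc : c = i
    · subst hc
      rw [Matrix.updateCol_self]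
      simp [Rmat, hA2, Function.update_self]
    · rw [Matrix.updateCol_ne hc]
      simp [Rmat, hA1, Function.update_of_ne hc]
  have hinj : Function.Injective
      (Function.update (fun i' : Fin m => Fin.castAdd k i') i (Fin.natAdd m j)) := by
    intro a b hab
    by_cases ha : a = i <;> by_cases hb : b = i
    · rw [ha, hb]
    · rw [ha] at hab ⊢
      rw [Function.update_self, Function.update_of_ne hb] at hab
      exfalso
      have := congrArg (fun t : Fin (m + k) => (t : ℕ)) hab
      simp at this
      omega
    · rw [hb] at hab ⊢
      rw [Function.update_self, Function.update_of_ne ha] at hab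
      exfalso
      have := congrArg (fun t : Fin (m + k) => (t : ℕ)) hab
      simp at this
      omega
    · rw [Function.update_of_ne ha, Function.update_of_ne hb] at hab
      exact Fin.castAdd_injective m k hab
  set I : Fin m ↪ Fin (m + k) :=
    ⟨Function.update (fun i' : Fin m => Fin.castAdd k i') i (Fin.natAdd m j), hinj⟩ with hI
  have hminor : |((Rmat A1).updateCol i (fun r => Rmat A2 r j)).det| ≤ (mMax A : ℝ) := by
    rw [hupd]
    have : (A.submatrix id (Function.update (fun i' : Fin m => Fin.castAdd k i') i (Fin.natAdd m j)))
        = A.submatrix id ⇑I := rfl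
    rw [this, cast_det]
    have h1 : |(A.submatrix id ⇑I).det| ≤ mMax A := le_mMax A I
    calc |((A.submatrix id ⇑I).det : ℝ)| = (|(A.submatrix id ⇑I).det| : ℝ) := by
          push_cast; rfl
      _ ≤ (mMax A : ℝ) := by exact_mod_cast h1
  rw [hentry, abs_mul, abs_inv, cast_det]
  have hpos : (0:ℝ) < |(A1.det : ℝ)| := by
    rw [abs_pos]; exact_mod_cast hdet
  rw [mul_comm, ← mul_assoc]
  rw [mul_inv_cancel₀ (ne_of_gt hpos), one_mul]
  exact hminor

end EntryBound

section Bound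

variable {m n : ℕ}

/-- Positive lower bound on ‖Ax‖ in terms of the coordinate sum, for x ≥ 0. -/
lemma norm_lower_bound [NeZero n] (A : Matrix (Fin m) (Fin n) ℤ)
    (hreg : ∀ x : Fin n → ℝ, (∀ i, 0 ≤ x i) → (Rmat A).mulVec x = 0 → x = 0) :
    ∃ δ : ℝ, 0 < δ ∧ ∀ x : Fin n → ℝ, (∀ i, 0 ≤ x i) → δ * (∑ i, x i) ≤ ‖(Rmat A).mulVec x‖ := by
  classical
  have hcont : Continuous fun x : Fin n → ℝ => ‖(Rmat A).mulVec x‖ := by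
    have h1 : Continuous fun x : Fin n → ℝ => (Rmat A).mulVecLin x :=
      (Rmat A).mulVecLin.continuous_of_finiteDimensional
    simpa [Matrix.mulVecLin_apply] using h1.norm
  have hne : (stdSimplex ℝ (Fin n)).Nonempty := ⟨fun _ => (n : ℝ)⁻¹, by
    constructor
    · intro i; positivity
    · rw [Finset.sum_const, Finset.card_univ, Fintype.card_fin, nsmul_eq_mul,
        mul_inv_cancel₀ (by exact_mod_cast NeZero.ne n)]⟩
  obtain ⟨x₀, hx₀S, hx₀'⟩ :=
    (isCompact_stdSimplex ℝ (Fin n)).exists_isMinOn hne hcont.continuousOn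
  have hx₀ : ∀ y ∈ stdSimplex ℝ (Fin n), ‖(Rmat A).mulVec x₀‖ ≤ ‖(Rmat A).mulVec y‖ :=
    fun y hy => hx₀' hy
  obtain ⟨hx₀nn, hx₀sum⟩ := hx₀S
  set δ := ‖(Rmat A).mulVec x₀‖ with hδ
  have hδpos : 0 < δ := by
    rcases eq_or_lt_of_le (norm_nonneg ((Rmat A).mulVec x₀)) with h | h
    · exfalso
      have : (Rmat A).mulVec x₀ = 0 := by rwa [eq_comm, norm_eq_zero] at h
      have hx0 : x₀ = 0 := hreg x₀ hx₀nn this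
      rw [hx0] at hx₀sum
      simp at hx₀sum
    · exact h
  refine ⟨δ, hδpos, fun x hx => ?_⟩
  rcases eq_or_lt_of_le (Finset.sum_nonneg fun i _ => hx i) with hsum | hsum
  · have hx0 : x = 0 := by
      funext i
      have h1 : x i ≤ ∑ j, x j := Finset.single_le_sum (fun j _ => hx j) (Finset.mem_univ i)
      rw [← hsum] at h1
      exact le_antisymm h1 (hx i)
    rw [hx0]
    simp [← hsum]
  · set σ := ∑ i, x i with hσ
    have hmem : σ⁻¹ • x ∈ stdSimplex ℝ (Fin n) := by
      constructor
      · intro i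
        exact mul_nonneg (inv_nonneg.mpr hsum.le) (hx i)
      · simp only [Pi.smul_apply, smul_eq_mul, ← Finset.mul_sum]
        rw [inv_mul_cancel₀ (ne_of_gt hsum)]
    have := hx₀ _ hmem
    rw [Matrix.mulVec_smul, norm_smul] at this
    simp only [norm_inv, Real.norm_eq_abs, abs_of_pos hsum] at this
    calc δ * σ ≤ (σ⁻¹ * ‖(Rmat A).mulVec x‖) * σ := by
          exact mul_le_mul_of_nonneg_right this hsum.le
      _ = ‖(Rmat A).mulVec x‖ := by field_simp
end Bound

section Interior
variable {m k : ℕ} (A : Matrix (Fin m) (Fin (m + k)) ℤ)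
  (A1 : Matrix (Fin m) (Fin m) ℤ)

lemma mem_interior_cone (hA1 : A1 = Matrix.of fun i j => A i (Fin.castAdd k j))
    (hdet : A1.det ≠ 0) (w : Fin m → ℝ) (q : Fin m → ℝ) (hq : ∀ i, 0 < q i) :
    w + (Rmat A1).mulVec q ∈ interior ((fun c => w + c) '' coneOf A) := by
  classical
  have hdetR : (Rmat A1).det ≠ 0 := by rw [cast_det]; exact_mod_cast hdet
  have hIs : IsUnit (Rmat A1).det := isUnit_iff_ne_zero.mpr hdetR
  set P : Set (Fin m → ℝ) := {q : Fin m → ℝ | ∀ i, 0 < q i} with hP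
  have hPopen : IsOpen P := by
    have : P = ⋂ i, (fun q : Fin m → ℝ => q i) ⁻¹' Set.Ioi 0 := by
      ext q; simp [hP, Set.mem_iInter]
    rw [this]
    exact isOpen_iInter_of_finite fun i => (isOpen_Ioi).preimage (continuous_apply i)
  have himg : (Rmat A1).mulVec '' P = (Rmat A1)⁻¹.mulVec ⁻¹' P := by
    ext x
    constructor
    · rintro ⟨q, hqP, rfl⟩
      have : (Rmat A1)⁻¹.mulVec ((Rmat A1).mulVec q) = q := by
        rw [Matrix.mulVec_mulVec, Matrix.nonsing_inv_mul _ hIs, Matrix.one_mulVec]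
      simpa [Set.mem_preimage, this]
    · intro hx
      refine ⟨(Rmat A1)⁻¹.mulVec x, hx, ?_⟩
      rw [Matrix.mulVec_mulVec, Matrix.mul_nonsing_inv _ hIs, Matrix.one_mulVec]
  have hopen2 : IsOpen ((Rmat A1).mulVec '' P) := by
    rw [himg]
    have : Continuous fun x : Fin m → ℝ => (Rmat A1)⁻¹.mulVec x := by
      have h1 : Continuous fun x : Fin m → ℝ => ((Rmat A1)⁻¹).mulVecLin x :=
        ((Rmat A1)⁻¹).mulVecLin.continuous_of_finiteDimensional
      simpa [Matrix.mulVecLin_apply] using h1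
    exact hPopen.preimage this
  have hsub : (fun c => w + c) '' ((Rmat A1).mulVec '' P) ⊆ (fun c => w + c) '' coneOf A := by
    apply Set.image_mono
    rintro x ⟨q', hq', rfl⟩
    refine ⟨fun l => Fin.addCases (fun i => q' i) (fun _ => 0) l, ?_, ?_⟩
    · intro l
      refine Fin.addCases (fun i => ?_) (fun j => ?_) l
      · simpa using (hq' i).le
      · simp
    · rw [mulVec_split]
      have e1 : (Matrix.of fun i j => Rmat A i (Fin.castAdd k j)) = Rmat A1 := by
        rw [hA1]; rfl
      rw [e1]
      have e2 : (fun j : Fin m => Fin.addCases (motive := fun _ : Fin (m+k) => ℝ) (fun i => q' i) (fun _ => 0) (Fin.castAdd k j)) = q' := by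
        funext j; simp
      have e3 : (fun j : Fin k => Fin.addCases (motive := fun _ : Fin (m+k) => ℝ) (fun i => q' i) (fun _ => 0) (Fin.natAdd m j)) = fun _ => (0:ℝ) := by
        funext j; simp
      rw [e2, e3]
      have : (Matrix.of fun i j => Rmat A i (Fin.natAdd m j)).mulVec (fun _ => (0:ℝ)) = 0 := by
        have : (fun _ => (0:ℝ)) = (0 : Fin k → ℝ) := rfl
        rw [this, Matrix.mulVec_zero]
      rw [this, add_zero]
  have hopen3 : IsOpen ((fun c => w + c) '' ((Rmat A1).mulVec '' P)) :=
    (Homeomorph.addLeft w).isOpenMap _ hopen2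
  apply interior_maximal hsub hopen3
  exact ⟨(Rmat A1).mulVec q, ⟨q, hq, rfl⟩, rfl⟩

end Interior


section BranchA

set_option maxHeartbeats 1000000 in
lemma branchA {m k : ℕ} (hm : 1 ≤ m) (hk : 1 ≤ k) (s : ℕ) (hs : 1 ≤ s)
    (A : Matrix (Fin m) (Fin (m + k)) ℤ) (hA : regular A)
    (A1 : Matrix (Fin m) (Fin m) ℤ) (hA1 : A1 = Matrix.of fun i j => A i (Fin.castAdd k j))
    (A2 : Matrix (Fin m) (Fin k) ℤ) (hA2 : A2 = Matrix.of fun i j => A i (Fin.natAdd m j))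
    (hdet : A1.det ≠ 0)
    (c : ℝ) (hc : c = sSup {x : ℝ | ∃ i : Fin m,
      x = ∑ j : Fin k,
        max (((A1.map (Int.cast : ℤ → ℝ))⁻¹ * A2.map (Int.cast : ℤ → ℝ)) i j) 0})
    (vbar : Fin m → ℤ) (hvbar : vbar = fun i => ∑ j : Fin m, A1 i j)
    (onehat : Fin (m + k) → ℝ) (honehat : onehat = fun j : Fin (m + k) => if (j : ℕ) < m then (1 : ℝ) else 0)
    (hmin : 1 ≤ mMin A)
    (t : ℝ) (ht0 : 0 ≤ t)
    (hfeas : ∀ b : Fin m → ℤ, Rvec b ∈ interior ((fun c' => t • vA A + c') '' coneOf A) → b ∈ feas s A) :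
    0 < ((k:ℝ)+1) * ((mMax A : ℝ) / (mMin A : ℝ)) * t + 2 + c ∧
    ∀ x ∈ Submodule.span ℝ (kerLat A),
      ∃ T : Finset (Fin (m+k) → ℝ), ↑T ⊆ kerLat A ∧ s ≤ T.card ∧
        ∀ y ∈ T, ∃ kk ∈ ((fun x => x - onehat) '' knap A (Rvec vbar)),
          x = y + (((k:ℝ)+1) * ((mMax A : ℝ) / (mMin A : ℝ)) * t + 2 + c) • kk := by
  classical
  set E : Matrix (Fin m) (Fin k) ℝ := (Rmat A1)⁻¹ * Rmat A2 with hE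
  set Mr : ℝ := (mMax A : ℝ) with hMr
  set mr : ℝ := (mMin A : ℝ) with hmr
  have hmr1 : 1 ≤ mr := by rw [hmr]; exact_mod_cast hmin
  have hmrpos : 0 < mr := lt_of_lt_of_le one_pos hmr1
  have hdetabs : mr ≤ |(A1.det : ℝ)| := by
    rw [hmr]
    have := mMin_le_detA1 A A1 hA1
    calc (mMin A : ℝ) ≤ (|A1.det| : ℝ) := by exact_mod_cast this
      _ = |(A1.det : ℝ)| := by push_cast; ring
  have hMrge : mr ≤ Mr := by
    rw [hmr, hMr]
    exact_mod_cast le_trans (mMin_le_detA1 A A1 hA1) (detA1_le_mMax A A1 hA1)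
  have hR1 : 1 ≤ Mr / mr := (le_div_iff₀ hmrpos).mpr (by linarith)
  have hRpos : 0 < Mr / mr := lt_of_lt_of_le one_pos hR1
  have hEbound : ∀ i j, |E i j| ≤ Mr / mr := by
    intro i j
    have h1 := entry_bound A A1 A2 hA1 hA2 hdet i j
    have h2 : |E i j| * mr ≤ |E i j| * |(A1.det : ℝ)| :=
      mul_le_mul_of_nonneg_left hdetabs (abs_nonneg _)
    exact (le_div_iff₀ hmrpos).mpr (le_trans h2 h1)
  have hcSet : {x : ℝ | ∃ i : Fin m,
      x = ∑ j : Fin k, max (((A1.map (Int.cast : ℤ → ℝ))⁻¹ * A2.map (Int.cast : ℤ → ℝ)) i j) 0}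
      = Set.range (fun i : Fin m => ∑ j : Fin k, max (E i j) 0) := by
    ext x; constructor
    · rintro ⟨i, rfl⟩; exact ⟨i, rfl⟩
    · rintro ⟨i, rfl⟩; exact ⟨i, rfl⟩
  have hcib : ∀ i : Fin m, (∑ j, max (E i j) 0) ≤ c := by
    intro i
    rw [hc, hcSet]
    exact le_csSup (Set.finite_range _).bddAbove ⟨i, rfl⟩
  have hi0 : Fin m := ⟨0, hm⟩
  have hc0 : 0 ≤ c := by
    refine le_trans ?_ (hcib hi0)
    exact Finset.sum_nonneg fun j _ => le_max_right _ _
  have hrowmax : ∀ i : Fin m, (∑ j, max (E i j) 0) ≤ (k : ℝ) * (Mr / mr) := by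
    intro i
    calc (∑ j, max (E i j) 0) ≤ ∑ j : Fin k, Mr / mr := by
          refine Finset.sum_le_sum fun j _ => ?_
          rw [max_le_iff]
          exact ⟨le_trans (le_abs_self _) (hEbound i j), hRpos.le⟩
      _ = (k : ℝ) * (Mr / mr) := by rw [Finset.sum_const, Finset.card_univ, Fintype.card_fin,
            nsmul_eq_mul]
  set μt : ℝ := ((k:ℝ)+1) * (Mr / mr) * t + 2 + c with hμt
  have hμpos : 0 < μt := by
    have : 0 ≤ ((k:ℝ)+1) * (Mr / mr) * t := by positivity
    rw [hμt]; linarith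
  refine ⟨hμpos, ?_⟩
  intro x hx
  -- x is in the real kernel of A
  have hxker : (Rmat A).mulVec x = 0 := by
    have hle : Submodule.span ℝ (kerLat A) ≤ LinearMap.ker (Rmat A).mulVecLin := by
      rw [Submodule.span_le]
      rintro _ ⟨z, hz, rfl⟩
      simp only [SetLike.mem_coe, LinearMap.mem_ker, Matrix.mulVecLin_apply]
      rw [cast_mulVec, hz]
      funext r; simp [Rvec]
    have := hle hx
    simpa [Matrix.mulVecLin_apply] using this
  -- split x
  set x1 : Fin m → ℝ := fun i => x (Fin.castAdd k i) with hx1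
  set x2 : Fin k → ℝ := fun j => x (Fin.natAdd m j) with hx2
  have hdetR : (Rmat A1).det ≠ 0 := by rw [cast_det]; exact_mod_cast hdet
  have hIs : IsUnit (Rmat A1).det := isUnit_iff_ne_zero.mpr hdetR
  have he1 : (Matrix.of fun i j => Rmat A i (Fin.castAdd k j)) = Rmat A1 := by rw [hA1]; rfl
  have he2 : (Matrix.of fun i j => Rmat A i (Fin.natAdd m j)) = Rmat A2 := by rw [hA2]; rfl
  have hker_split : (Rmat A1).mulVec x1 + (Rmat A2).mulVec x2 = 0 := by
    have h := mulVec_split (Rmat A) x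
    rw [hxker] at h
    rw [← he1, ← he2]
    exact h.symm
  -- x1 = - E x2
  have hx1E : x1 = -E.mulVec x2 := by
    have h1 : (Rmat A1).mulVec x1 = -((Rmat A2).mulVec x2) :=
      eq_neg_of_add_eq_zero_left hker_split
    calc x1 = (1 : Matrix (Fin m) (Fin m) ℝ).mulVec x1 := by rw [Matrix.one_mulVec]
      _ = ((Rmat A1)⁻¹ * Rmat A1).mulVec x1 := by rw [Matrix.nonsing_inv_mul _ hIs]
      _ = (Rmat A1)⁻¹.mulVec ((Rmat A1).mulVec x1) := by rw [Matrix.mulVec_mulVec]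
      _ = (Rmat A1)⁻¹.mulVec (-((Rmat A2).mulVec x2)) := by rw [h1]
      _ = -((Rmat A1)⁻¹.mulVec ((Rmat A2).mulVec x2)) := by rw [Matrix.mulVec_neg]
      _ = -E.mulVec x2 := by rw [Matrix.mulVec_mulVec]
  -- the integer point u
  set u2 : Fin k → ℤ := fun j => ⌊x2 j⌋ with hu2
  set Av : Fin m → ℝ := (Rmat A1)⁻¹.mulVec (vA A) with hAv
  set σv : Fin m → ℝ := t • Av - E.mulVec (fun j => (u2 j : ℝ)) with hσv
  set u1 : Fin m → ℤ := fun i => ⌊σv i⌋ + 1 with hu1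
  set u : Fin (m+k) → ℤ := fun l =>
    Fin.addCases (motive := fun _ : Fin (m+k) => ℤ) (fun i => u1 i) (fun j => u2 j) l with hu
  set b : Fin m → ℤ := A.mulVec u with hb
  have hucast : (fun i : Fin m => (Rvec u) (Fin.castAdd k i)) = fun i => (u1 i : ℝ) := by
    funext i; simp [Rvec, hu]
  have hunat : (fun j : Fin k => (Rvec u) (Fin.natAdd m j)) = fun j => (u2 j : ℝ) := by
    funext j; simp [Rvec, hu]
  -- key: Rvec b = t • vA A + A1 (u1 - σv)
  have hbeq : Rvec b = t • vA A + (Rmat A1).mulVec (fun i => (u1 i : ℝ) - σv i) := by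
    rw [hb, ← cast_mulVec, mulVec_split (Rmat A) (Rvec u), he1, he2, hucast, hunat]
    have hAσ : (Rmat A1).mulVec σv = t • vA A - (Rmat A2).mulVec (fun j => (u2 j : ℝ)) := by
      rw [hσv]
      rw [Matrix.mulVec_sub, Matrix.mulVec_smul]
      congr 1
      · rw [hAv, Matrix.mulVec_mulVec, Matrix.mul_nonsing_inv _ hIs, Matrix.one_mulVec]
      · rw [hE, Matrix.mulVec_mulVec, ← Matrix.mul_assoc,
          Matrix.mul_nonsing_inv _ hIs, Matrix.one_mul]
    have : (Rmat A1).mulVec (fun i => (u1 i : ℝ) - σv i)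
        = (Rmat A1).mulVec (fun i => (u1 i : ℝ)) - (Rmat A1).mulVec σv := by
      rw [← Matrix.mulVec_sub]; rfl
    rw [this, hAσ]
    abel
  have hq : ∀ i, 0 < (u1 i : ℝ) - σv i := by
    intro i
    rw [hu1]
    push_cast
    have := Int.lt_floor_add_one (σv i)
    linarith
  have hqle : ∀ i, (u1 i : ℝ) - σv i ≤ 1 := by
    intro i
    rw [hu1]
    push_cast
    have := Int.floor_le (σv i)
    linarith
  -- b lies deep in the cone
  have hbint : Rvec b ∈ interior ((fun c' => t • vA A + c') '' coneOf A) := by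
    rw [hbeq]
    exact mem_interior_cone A A1 hA1 hdet (t • vA A) _ hq
  have hbfeas : b ∈ feas s A := hfeas b hbint
  -- the solution set and the finset T
  set Z : Set (Fin (m+k) → ℤ) := {z | (∀ i, 0 ≤ z i) ∧ A.mulVec z = b} with hZ
  have hZcard : s ≤ Z.ncard := hbfeas
  have hZfin : Z.Finite := by
    by_contra h
    rw [Set.Infinite.ncard h] at hZcard
    omega
  set T : Finset (Fin (m+k) → ℝ) := Finset.image (fun z => Rvec (u - z)) hZfin.toFinset with hT
  have hinj : Function.Injective (fun z : Fin (m+k) → ℤ => Rvec (u - z)) := by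
    intro z z' hzz
    funext l
    have h1 := congrFun hzz l
    simp only [Rvec, Pi.sub_apply, Int.cast_sub, Int.cast_inj, sub_right_injective] at h1
    have : ((u l - z l : ℤ) : ℝ) = ((u l - z' l : ℤ) : ℝ) := by push_cast; push_cast at h1; linarith
    have := Int.cast_injective this
    omega
  have hTcard : s ≤ T.card := by
    rw [hT, Finset.card_image_of_injective _ hinj, ← Set.ncard_eq_toFinset_card Z hZfin]
    exact hZcard
  have hTsub : ↑T ⊆ kerLat A := by
    intro y hy
    rw [hT] at hy
    simp only [Finset.coe_image, Set.mem_image, Set.Finite.coe_toFinset] at hy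
    obtain ⟨z, hzZ, rfl⟩ := hy
    refine ⟨u - z, ?_, rfl⟩
    have : A.mulVec (u - z) = A.mulVec u - A.mulVec z := Matrix.mulVec_sub A u z
    rw [this, hzZ.2, ← hb, sub_self]
  refine ⟨T, hTsub, hTcard, ?_⟩
  -- bounds used for the first-block coordinates
  have hAvEq : Av = (fun _ => (1:ℝ)) + E.mulVec (fun _ => (1:ℝ)) := by
    rw [hAv]
    have hv : vA A = (Rmat A1).mulVec (fun _ => (1:ℝ)) + (Rmat A2).mulVec (fun _ => (1:ℝ)) := by
      rw [vA, mulVec_split (Rmat A) (fun _ => (1:ℝ)), he1, he2]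
    rw [hv, Matrix.mulVec_add, Matrix.mulVec_mulVec, Matrix.nonsing_inv_mul _ hIs,
      Matrix.one_mulVec, hE, ← Matrix.mulVec_mulVec]
  have hEδ : ∀ (δ : Fin k → ℝ), (∀ j, 0 ≤ δ j) → (∀ j, δ j ≤ 1) →
      ∀ i, (E.mulVec δ) i ≤ ∑ j, max (E i j) 0 := by
    intro δ hδ0 hδ1 i
    rw [Matrix.mulVec, dotProduct]
    refine Finset.sum_le_sum fun j _ => ?_
    rcases le_or_gt 0 (E i j) with h | h
    · calc E i j * δ j ≤ E i j * 1 := mul_le_mul_of_nonneg_left (hδ1 j) h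
        _ = E i j := mul_one _
        _ ≤ max (E i j) 0 := le_max_left _ _
    · calc E i j * δ j ≤ 0 := mul_nonpos_of_nonpos_of_nonneg h.le (hδ0 j)
        _ ≤ max (E i j) 0 := le_max_right _ _
  have hAvi : ∀ i, Av i ≤ 1 + (k:ℝ) * (Mr / mr) := by
    intro i
    rw [hAvEq]
    have h1 : (E.mulVec (fun _ => (1:ℝ))) i ≤ ∑ j, max (E i j) 0 :=
      hEδ _ (fun _ => zero_le_one) (fun _ => le_refl 1) i
    have := hrowmax i
    simp only [Pi.add_apply]
    linarith
  have hσx : ∀ i, σv i - x1 i ≤ ((k:ℝ)+1) * (Mr / mr) * t + c := by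
    intro i
    have hδ0 : ∀ j, 0 ≤ x2 j - (u2 j : ℝ) := by
      intro j; rw [hu2]; simp only [sub_nonneg]; exact Int.floor_le (x2 j)
    have hδ1 : ∀ j, x2 j - (u2 j : ℝ) ≤ 1 := by
      intro j; rw [hu2]
      have := Int.lt_floor_add_one (x2 j)
      push_cast
      linarith
    have hEx : (E.mulVec (fun j => x2 j - (u2 j : ℝ))) i ≤ ∑ j, max (E i j) 0 := hEδ _ hδ0 hδ1 i
    have hsplitE : (E.mulVec (fun j => x2 j - (u2 j : ℝ))) i
        = (E.mulVec x2) i - (E.mulVec (fun j => (u2 j : ℝ))) i := by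
      have : (fun j => x2 j - (u2 j : ℝ)) = x2 - (fun j => (u2 j : ℝ)) := rfl
      rw [this, Matrix.mulVec_sub]; rfl
    have hx1i : x1 i = -(E.mulVec x2) i := by rw [hx1E]; rfl
    have hσi : σv i = t * Av i - (E.mulVec (fun j => (u2 j : ℝ))) i := by
      rw [hσv]; simp
    have hAvb := hAvi i
    have hcb := hcib i
    have htk : t * (1 + (k:ℝ) * (Mr / mr)) ≤ ((k:ℝ)+1) * (Mr / mr) * t := by
      have h1 : 1 + (k:ℝ) * (Mr / mr) ≤ ((k:ℝ)+1) * (Mr / mr) := by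
        have hk0 : (0:ℝ) ≤ (k:ℝ) := Nat.cast_nonneg k
        nlinarith
      nlinarith
    have hmul : t * Av i ≤ t * (1 + (k:ℝ) * (Mr / mr)) := mul_le_mul_of_nonneg_left hAvb ht0
    have : σv i - x1 i = t * Av i + (E.mulVec (fun j => x2 j - (u2 j : ℝ))) i := by
      rw [hσi, hsplitE, hx1i]; ring
    rw [this]
    linarith
  have hu1b : ∀ i, (u1 i : ℝ) - x1 i ≤ μt - 1 := by
    intro i
    have h1 := hqle i
    have h2 := hσx i
    rw [hμt]
    linarith
  -- final verification for each lattice point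
  intro y hy
  rw [hT] at hy
  simp only [Finset.mem_image, Set.Finite.mem_toFinset] at hy
  obtain ⟨z, hzZ, rfl⟩ := hy
  obtain ⟨hznn, hzb⟩ := hzZ
  have hAy : (Rmat A).mulVec (Rvec (u - z)) = 0 := by
    rw [cast_mulVec]
    have : A.mulVec (u - z) = A.mulVec u - A.mulVec z := Matrix.mulVec_sub A u z
    rw [this, hzb, ← hb, sub_self]
    funext r; simp [Rvec]
  set p : Fin (m+k) → ℝ := onehat + μt⁻¹ • (x - Rvec (u - z)) with hp
  have hpknap : p ∈ knap A (Rvec vbar) := by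
    constructor
    · -- nonnegativity
      intro l
      refine Fin.addCases (motive := fun l => 0 ≤ p l) (fun i => ?_) (fun j => ?_) l
      · have h1 : onehat (Fin.castAdd k i) = 1 := by
          rw [honehat]
          simp [Fin.coe_castAdd, i.isLt]
        have h2 : Rvec (u - z) (Fin.castAdd k i) = (u1 i : ℝ) - (z (Fin.castAdd k i) : ℝ) := by
          simp [Rvec, hu]
        have h3 : (0:ℝ) ≤ (z (Fin.castAdd k i) : ℝ) := by exact_mod_cast hznn _
        have h4 : x (Fin.castAdd k i) = x1 i := rfl
        rw [hp]
        simp only [Pi.add_apply, Pi.smul_apply, Pi.sub_apply, smul_eq_mul, h1, h2, h4]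
        have h5 : x1 i - ((u1 i : ℝ) - (z (Fin.castAdd k i) : ℝ)) ≥ -μt := by
          have := hu1b i
          linarith
        have h6 : μt⁻¹ * (x1 i - ((u1 i : ℝ) - (z (Fin.castAdd k i) : ℝ)))
            ≥ μt⁻¹ * (-μt) := by
          apply mul_le_mul_of_nonneg_left h5 (inv_nonneg.mpr hμpos.le)
        rw [mul_neg, inv_mul_cancel₀ hμpos.ne'] at h6
        linarith
      · have h1 : onehat (Fin.natAdd m j) = 0 := by
          rw [honehat]
          simp only [Fin.coe_natAdd]
          rw [if_neg (by omega)]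
        have h2 : Rvec (u - z) (Fin.natAdd m j) = (u2 j : ℝ) - (z (Fin.natAdd m j) : ℝ) := by
          simp [Rvec, hu]
        have h3 : (0:ℝ) ≤ (z (Fin.natAdd m j) : ℝ) := by exact_mod_cast hznn _
        have h4 : x (Fin.natAdd m j) = x2 j := rfl
        have h5 : (u2 j : ℝ) ≤ x2 j := by rw [hu2]; exact Int.floor_le (x2 j)
        rw [hp]
        simp only [Pi.add_apply, Pi.smul_apply, Pi.sub_apply, smul_eq_mul, h1, h2, h4]
        have h6 : 0 ≤ x2 j - ((u2 j : ℝ) - (z (Fin.natAdd m j) : ℝ)) := by linarith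
        have := mul_nonneg (inv_nonneg.mpr hμpos.le) h6
        linarith
    · -- A p = vbar
      have hAonehat : (Rmat A).mulVec onehat = Rvec vbar := by
        rw [mulVec_split (Rmat A) onehat, he1, he2]
        have h1 : (fun j : Fin m => onehat (Fin.castAdd k j)) = fun _ => (1:ℝ) := by
          funext j
          rw [honehat]
          simp [Fin.coe_castAdd, j.isLt]
        have h2 : (fun j : Fin k => onehat (Fin.natAdd m j)) = (0 : Fin k → ℝ) := by
          funext j
          rw [honehat]
          simp only [Fin.coe_natAdd]
          rw [if_neg (by omega)]
          rfl
        rw [h1, h2, Matrix.mulVec_zero, add_zero]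
        funext i
        simp only [Matrix.mulVec, dotProduct, mul_one, Rvec, hvbar]
        rw [Rmat]
        push_cast
        simp [Matrix.map_apply]
      rw [hp, Matrix.mulVec_add, hAonehat, Matrix.mulVec_smul, Matrix.mulVec_sub,
        hxker, hAy, sub_self, smul_zero, add_zero]
  refine ⟨p - onehat, ⟨p, hpknap, rfl⟩, ?_⟩
  rw [hp]
  have : onehat + μt⁻¹ • (x - Rvec (u - z)) - onehat = μt⁻¹ • (x - Rvec (u - z)) := by
    abel
  rw [this, smul_inv_smul₀ hμpos.ne']
  abel

end BranchA


section BranchB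

set_option maxHeartbeats 1000000 in
lemma branchB {m k : ℕ} (hm : 1 ≤ m) (hk : 1 ≤ k) (s : ℕ) (hs : 1 ≤ s)
    (A : Matrix (Fin m) (Fin (m + k)) ℤ) (hA : regular A)
    (A1 : Matrix (Fin m) (Fin m) ℤ) (hA1 : A1 = Matrix.of fun i j => A i (Fin.castAdd k j))
    (A2 : Matrix (Fin m) (Fin k) ℤ) (hA2 : A2 = Matrix.of fun i j => A i (Fin.natAdd m j))
    (hdet : A1.det ≠ 0)
    (vbar : Fin m → ℤ) (hvbar : vbar = fun i => ∑ j : Fin m, A1 i j)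
    (onehat : Fin (m + k) → ℝ) (honehat : onehat = fun j : Fin (m + k) => if (j : ℕ) < m then (1 : ℝ) else 0)
    (μ0 : ℝ) (hμ0 : 0 < μ0)
    (hcov : ∀ x ∈ Submodule.span ℝ (kerLat A),
      ∃ T : Finset (Fin (m+k) → ℝ), ↑T ⊆ kerLat A ∧ s ≤ T.card ∧
        ∀ y ∈ T, ∃ kk ∈ ((fun x => x - onehat) '' knap A (Rvec vbar)), x = y + μ0 • kk) :
    ∃ t : ℝ, 0 ≤ t ∧
      ∀ b : Fin m → ℤ, Rvec b ∈ interior ((fun c' => t • vA A + c') '' coneOf A) → b ∈ feas s A := by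
  classical
  haveI : NeZero (m + k) := ⟨by omega⟩
  obtain ⟨δ, hδpos, hδ⟩ := norm_lower_bound A hA.2
  set R : ℝ := ‖Rvec vbar‖ / δ with hR
  have hR0 : 0 ≤ R := div_nonneg (norm_nonneg _) hδpos.le
  refine ⟨μ0 * R, mul_nonneg hμ0.le hR0, ?_⟩
  intro b hbint
  have hbC : Rvec b ∈ (fun c' => (μ0 * R) • vA A + c') '' coneOf A := interior_subset hbint
  obtain ⟨cc, ⟨r', hr'nn, hr'eq⟩, hbeq⟩ := hbC
  -- the real diagonal solution
  set xt : Fin (m+k) → ℝ := (μ0 * R) • (fun _ => (1:ℝ)) + r' with hxt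
  have hxtb : (Rmat A).mulVec xt = Rvec b := by
    rw [hxt, Matrix.mulVec_add, Matrix.mulVec_smul, hr'eq, ← hbeq]
    rfl
  have hxtge : ∀ l, μ0 * R ≤ xt l := by
    intro l
    rw [hxt]
    simp only [Pi.add_apply, Pi.smul_apply, smul_eq_mul, mul_one]
    have := hr'nn l
    linarith
  -- integral solution
  obtain ⟨z0, hz0⟩ := A_surjective A hA.1 b
  set x : Fin (m+k) → ℝ := xt - Rvec z0 with hxdef
  have hxker : (Rmat A).mulVec x = 0 := by
    rw [hxdef, Matrix.mulVec_sub, hxtb, cast_mulVec, hz0, sub_self]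
  have hxspan : x ∈ Submodule.span ℝ (kerLat A) :=
    ker_sub_span A A1 A2 hA1 hA2 hdet x hxker
  obtain ⟨T, hTsub, hTcard, hTprop⟩ := hcov x hxspan
  -- uniform bound on knapsack points
  have hPbound : ∀ p ∈ knap A (Rvec vbar), ∀ l, p l ≤ R := by
    rintro p ⟨hpnn, hpeq⟩ l
    have h1 : δ * (∑ i, p i) ≤ ‖Rvec vbar‖ := by
      have := hδ p hpnn
      rwa [hpeq] at this
    have h2 : ∑ i, p i ≤ R := by
      rw [hR, le_div_iff₀ hδpos]
      linarith
    have h3 : p l ≤ ∑ i, p i := Finset.single_le_sum (fun i _ => hpnn i) (Finset.mem_univ l)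
    linarith
  -- the map from covering points to solutions
  set φ : (Fin (m+k) → ℝ) → (Fin (m+k) → ℤ) := fun y => z0 + (fun l => ⌊y l⌋) with hφ
  set Z : Set (Fin (m+k) → ℤ) := {z | (∀ i, 0 ≤ z i) ∧ A.mulVec z = b} with hZ
  have hyfloor : ∀ y ∈ (T : Set (Fin (m+k) → ℝ)), Rvec (fun l => ⌊y l⌋) = y := by
    intro y hy
    obtain ⟨w, hw, rfl⟩ := hTsub hy
    funext l
    simp [Rvec]
  have hφmem : ∀ y ∈ (T : Set (Fin (m+k) → ℝ)), φ y ∈ Z := by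
    intro y hy
    obtain ⟨kk, ⟨p, hpknap, hpk⟩, hxyk⟩ := hTprop y hy
    obtain ⟨w, hw, hyw⟩ := hTsub hy
    have hfl : (fun l => ⌊y l⌋) = w := by
      funext l; rw [hyw]; simp [Rvec]
    constructor
    · -- nonnegativity
      intro l
      have hreal : Rvec (φ y) l = xt l - μ0 * p l + μ0 * onehat l := by
        have h1 : Rvec (φ y) l = (z0 l : ℝ) + y l := by
          rw [hφ]
          simp only [Pi.add_apply, Rvec]
          push_cast
          have : ((⌊y l⌋ : ℤ) : ℝ) = y l := by
            have := congrFun (hyfloor y hy) l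
            simpa [Rvec] using this
          rw [this]
        have h2 : y l = x l - μ0 * kk l := by
          have := congrFun hxyk l
          simp only [Pi.add_apply, Pi.smul_apply, smul_eq_mul] at this
          linarith
        have h3 : kk l = p l - onehat l := by rw [← hpk]; rfl
        rw [h1, h2, h3, hxdef]
        simp only [Pi.sub_apply, Rvec]
        ring
      have h4 : p l ≤ R := hPbound p hpknap l
      have h5 : 0 ≤ onehat l := by
        rw [honehat]
        dsimp only
        split <;> norm_num
      have h6 : (0:ℝ) ≤ Rvec (φ y) l := by
        rw [hreal]
        have := hxtge l
        nlinarith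
      have h7 : (0:ℝ) ≤ ((φ y l : ℤ) : ℝ) := by simpa [Rvec] using h6
      exact_mod_cast h7
    · -- A (φ y) = b
      rw [hφ]
      have : A.mulVec (z0 + fun l => ⌊y l⌋) = A.mulVec z0 + A.mulVec (fun l => ⌊y l⌋) :=
        Matrix.mulVec_add A _ _
      rw [this, hz0, hfl, hw, add_zero]
  -- Z is finite
  have hZfin : Z.Finite := by
    set B : ℤ := ⌈‖Rvec b‖ / δ⌉ with hB
    have hsub : Z ⊆ Set.pi Set.univ (fun l : Fin (m+k) => Set.Icc (0:ℤ) B) := by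
      rintro z ⟨hznn, hzeq⟩ l _
      constructor
      · exact hznn l
      · have hznnR : ∀ i, (0:ℝ) ≤ Rvec z i := by
          intro i
          show (0:ℝ) ≤ ((z i : ℤ) : ℝ)
          exact_mod_cast hznn i
        have h1 : δ * (∑ i, Rvec z i) ≤ ‖Rvec b‖ := by
          have h2 := hδ (Rvec z) hznnR
          rwa [cast_mulVec, hzeq] at h2
        have h3 : Rvec z l ≤ ∑ i, Rvec z i :=
          Finset.single_le_sum (fun i _ => hznnR i) (Finset.mem_univ l)
        have h4 : Rvec z l ≤ ‖Rvec b‖ / δ := by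
          rw [le_div_iff₀ hδpos]
          nlinarith
        have h5 : Rvec z l ≤ (B : ℝ) := le_trans h4 (by rw [hB]; exact Int.le_ceil _)
        have h6 : ((z l : ℤ) : ℝ) ≤ (B : ℝ) := h5
        exact_mod_cast h6
    exact Set.Finite.subset (Set.Finite.pi fun l => Set.finite_Icc _ _) hsub
  -- conclude feasibility
  have hinjφ : Set.InjOn φ (T : Set (Fin (m+k) → ℝ)) := by
    intro y hy y' hy' hyy
    have h1 : Rvec (fun l => ⌊y l⌋) = Rvec (fun l => ⌊y' l⌋) := by
      have : (fun l => ⌊y l⌋) = fun l => ⌊y' l⌋ := by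
        funext l
        have := congrFun hyy l
        simp only [hφ, Pi.add_apply] at this
        omega
      rw [this]
    rw [hyfloor y hy, hyfloor y' hy'] at h1
    exact h1
  have himg : φ '' (T : Set (Fin (m+k) → ℝ)) ⊆ Z := by
    rintro _ ⟨y, hy, rfl⟩
    exact hφmem y hy
  have hcount : s ≤ Z.ncard := by
    calc s ≤ T.card := hTcard
      _ = (T : Set (Fin (m+k) → ℝ)).ncard := (Set.ncard_coe_finset T).symm
      _ = (φ '' (T : Set (Fin (m+k) → ℝ))).ncard := (Set.ncard_image_of_injOn hinjφ).symm
      _ ≤ Z.ncard := Set.ncard_le_ncard himg hZfin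
  exact hcount

end BranchB

/-- Lower bound on g_s(A) via the s-covering radius (Lemma 3).
Here n = m + k, A = (A₁, A₂) with A₁ the first m columns. -/
theorem stmt_8 {m k : ℕ} (hm : 1 ≤ m) (hk : 1 ≤ k) (s : ℕ) (hs : 1 ≤ s)
    (A : Matrix (Fin m) (Fin (m + k)) ℤ) (hA : regular A)
    (A1 : Matrix (Fin m) (Fin m) ℤ) (hA1 : A1 = Matrix.of fun i j => A i (Fin.castAdd k j))
    (A2 : Matrix (Fin m) (Fin k) ℤ) (hA2 : A2 = Matrix.of fun i j => A i (Fin.natAdd m j))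
    (hdet : A1.det ≠ 0)
    (c : ℝ) (hc : c = sSup {x : ℝ | ∃ i : Fin m,
      x = ∑ j : Fin k,
        max (((A1.map (Int.cast : ℤ → ℝ))⁻¹ * A2.map (Int.cast : ℤ → ℝ)) i j) 0})
    (vbar : Fin m → ℤ) (hvbar : vbar = fun i => ∑ j : Fin m, A1 i j)
    (onehat : Fin (m + k) → ℝ) (honehat : onehat = fun j : Fin (m + k) => if (j : ℕ) < m then (1 : ℝ) else 0) :
    gFrob s A ≥ (1 / ((k : ℝ) + 1)) * ((mMin A : ℝ) / (mMax A : ℝ)) *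
      (muCov s ((fun x => x - onehat) '' knap A (Rvec vbar)) (kerLat A) - 2 - c) := by
  classical
  set K : Set (Fin (m+k) → ℝ) := (fun x => x - onehat) '' knap A (Rvec vbar) with hK
  set μ : ℝ := muCov s K (kerLat A) with hμ
  set Sg : Set ℝ := {t : ℝ | 0 ≤ t ∧
    ∀ b : Fin m → ℤ, Rvec b ∈ interior ((fun c' => t • vA A + c') '' coneOf A) → b ∈ feas s A}
    with hSg
  have hgFrob : gFrob s A = sInf Sg := rfl
  have hg0 : 0 ≤ gFrob s A := by
    rw [hgFrob]
    exact Real.sInf_nonneg (fun t ht => ht.1)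
  set μset : Set ℝ := {μ' : ℝ | 0 < μ' ∧ ∀ x ∈ Submodule.span ℝ (kerLat A),
    ∃ T : Finset (Fin (m+k) → ℝ), ↑T ⊆ kerLat A ∧ s ≤ T.card ∧
      ∀ y ∈ T, ∃ kk ∈ K, x = y + μ' • kk} with hμset
  have hμInf : μ = sInf μset := rfl
  -- basic positivity facts
  have hMax1 : 1 ≤ mMax A := by
    have h1 : (1:ℤ) ≤ |A1.det| := Int.one_le_abs hdet
    exact le_trans h1 (detA1_le_mMax A A1 hA1)
  have hMrpos : (0:ℝ) < (mMax A : ℝ) := by exact_mod_cast lt_of_lt_of_le one_pos hMax1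
  have hmin0 : 0 ≤ mMin A := mMin_nonneg A (embCast (m := m) (k := k))
  have hkpos : (0:ℝ) < (k:ℝ) + 1 := by positivity
  -- c is nonnegative
  have hc0 : 0 ≤ c := by
    have hcSet : {x : ℝ | ∃ i : Fin m,
        x = ∑ j : Fin k, max (((A1.map (Int.cast : ℤ → ℝ))⁻¹ * A2.map (Int.cast : ℤ → ℝ)) i j) 0}
        = Set.range (fun i : Fin m =>
          ∑ j : Fin k, max (((A1.map (Int.cast : ℤ → ℝ))⁻¹ * A2.map (Int.cast : ℤ → ℝ)) i j) 0) := by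
      ext x; constructor
      · rintro ⟨i, rfl⟩; exact ⟨i, rfl⟩
      · rintro ⟨i, rfl⟩; exact ⟨i, rfl⟩
    have hi0 : Fin m := ⟨0, hm⟩
    have h1 : (∑ j : Fin k,
        max (((A1.map (Int.cast : ℤ → ℝ))⁻¹ * A2.map (Int.cast : ℤ → ℝ)) hi0 j) 0) ≤ c := by
      rw [hc, hcSet]
      exact le_csSup (Set.finite_range _).bddAbove ⟨hi0, rfl⟩
    refine le_trans ?_ h1
    exact Finset.sum_nonneg fun j _ => le_max_right _ _
  by_cases hmin : 1 ≤ mMin A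
  · by_cases hμle : μ - 2 - c ≤ 0
    · -- right-hand side nonpositive
      have h1 : (0:ℝ) ≤ (1 / ((k : ℝ) + 1)) * ((mMin A : ℝ) / (mMax A : ℝ)) := by positivity
      have h2 : (1 / ((k : ℝ) + 1)) * ((mMin A : ℝ) / (mMax A : ℝ)) * (μ - 2 - c) ≤ 0 :=
        mul_nonpos_of_nonneg_of_nonpos h1 hμle
      exact le_trans h2 hg0
    · push_neg at hμle
      have hμ2 : 2 + c < μ := by linarith
      -- μset is nonempty
      have hμsetne : μset.Nonempty := by
        by_contra hemp
        rw [Set.not_nonempty_iff_eq_empty] at hemp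
        rw [hμInf, hemp, Real.sInf_empty] at hμ2
        linarith
      obtain ⟨μ0, hμ0pos, hμ0cov⟩ := hμsetne
      -- branch B: the Frobenius set Sg is nonempty
      obtain ⟨t0, ht00, ht0feas⟩ := branchB hm hk s hs A hA A1 hA1 A2 hA2 hdet vbar hvbar
        onehat honehat μ0 hμ0pos hμ0cov
      have hSgne : Sg.Nonempty := ⟨t0, ht00, ht0feas⟩
      -- branch A: every element of Sg is bounded below
      have hlow : ∀ t ∈ Sg, (1 / ((k : ℝ) + 1)) * ((mMin A : ℝ) / (mMax A : ℝ)) * (μ - 2 - c) ≤ t := by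
        rintro t ⟨ht0', hfeas'⟩
        obtain ⟨hμtpos, hμtcov⟩ := branchA hm hk s hs A hA A1 hA1 A2 hA2 hdet c hc vbar hvbar
          onehat honehat hmin t ht0' hfeas'
        have hmem : ((k:ℝ)+1) * ((mMax A : ℝ) / (mMin A : ℝ)) * t + 2 + c ∈ μset :=
          ⟨hμtpos, hμtcov⟩
        have hbdd : BddBelow μset := ⟨0, fun μ' hμ' => hμ'.1.le⟩
        have hle : μ ≤ ((k:ℝ)+1) * ((mMax A : ℝ) / (mMin A : ℝ)) * t + 2 + c := by
          rw [hμInf]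
          exact csInf_le hbdd hmem
        have hmrpos : (0:ℝ) < (mMin A : ℝ) := by exact_mod_cast lt_of_lt_of_le one_pos hmin
        have h1 : μ - 2 - c ≤ ((k:ℝ)+1) * ((mMax A : ℝ) / (mMin A : ℝ)) * t := by linarith
        have h2 : (0:ℝ) < (1 / ((k : ℝ) + 1)) * ((mMin A : ℝ) / (mMax A : ℝ)) := by positivity
        calc (1 / ((k : ℝ) + 1)) * ((mMin A : ℝ) / (mMax A : ℝ)) * (μ - 2 - c)
            ≤ (1 / ((k : ℝ) + 1)) * ((mMin A : ℝ) / (mMax A : ℝ))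
              * (((k:ℝ)+1) * ((mMax A : ℝ) / (mMin A : ℝ)) * t) :=
              mul_le_mul_of_nonneg_left h1 h2.le
          _ = t := by field_simp
      rw [ge_iff_le, hgFrob]
      exact le_csInf hSgne hlow
  · -- mMin A = 0
    have hz : mMin A = 0 := le_antisymm (by omega) hmin0
    have : (1 / ((k : ℝ) + 1)) * ((mMin A : ℝ) / (mMax A : ℝ)) * (μ - 2 - c) = 0 := by
      rw [hz]
      simp
    rw [ge_iff_le, this]
    exact hg0

end
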